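/- Let p and q be distinct primes with p odd, let α, β ≥ 1, and let G = (ℤ/p^αℤ) ⋊_Φ (ℤ/q^βℤ) be a semidirect product determined by a homomorphism Φ : ℤ/q^βℤ → Aut(ℤ/p^αℤ), where a chosen generator of ℤ/q^βℤ acts on a generator a₀ of ℤ/p^αℤ by a₀ ↦ a₀^r. Then every subgroup of G is indecomposable if and only if q^β divides p − 1 and r has order q^β in (ℤ/pℤ)^×. -/

import Mathlib

universe u

/-- A group is *indecomposable* if whenever it is isomorphic to a direct
product `A × B` of groups, one of `A` or `B` is trivial. -/
def Indecomposable (G : Type u) [Group G] : Prop :=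
  ∀ (A B : Type u) [Group A] [Group B], Nonempty (G ≃* A × B) →
    Subsingleton A ∨ Subsingleton B

open Multiplicative SemidirectProduct

-- x in ZMod (p^α) is a unit iff its image mod p is nonzero
lemma aux_unit (p α : ℕ) (hp : p.Prime) (hα : 1 ≤ α) (x : ZMod (p^α))
    (hx : (ZMod.castHom (dvd_pow_self p (by omega : α ≠ 0)) (ZMod p)) x ≠ 0) : IsUnit x := by
  haveI : NeZero (p ^ α) := ⟨pow_ne_zero _ hp.pos.ne'⟩
  have hxv : ((x.val : ℕ) : ZMod (p ^ α)) = x := ZMod.natCast_rightInverse x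
  rw [← hxv, ZMod.isUnit_iff_coprime]
  rw [Nat.coprime_pow_right_iff (by omega)]
  rw [Nat.coprime_comm, hp.coprime_iff_not_dvd]
  intro hdvd
  apply hx
  rw [ZMod.castHom_apply, ← ZMod.natCast_val]
  exact (ZMod.natCast_eq_zero_iff _ _).mpr hdvd

-- in ZMod (s^e), any element killed by s is a natural multiple of a given
-- nonzero element killed by s
lemma aux_line (s e : ℕ) (hs : s.Prime) (he : 1 ≤ e) (a b : ZMod (s^e))
    (ha : a ≠ 0) (ha' : s • a = 0) (hb : s • b = 0) : ∃ c : ℕ, b = c • a := by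
  haveI : NeZero (s ^ e) := ⟨pow_ne_zero _ hs.pos.ne'⟩
  have hkey : ∀ x : ZMod (s^e), s • x = 0 → s ^ (e-1) ∣ x.val := by
    intro x hx
    have h1 : ((s * x.val : ℕ) : ZMod (s^e)) = 0 := by
      push_cast
      rw [ZMod.natCast_val, ZMod.cast_id]
      rw [← nsmul_eq_mul]
      exact hx
    rw [ZMod.natCast_eq_zero_iff] at h1
    have h2 : s ^ (e - 1) * s ∣ s * x.val := by
      rwa [← pow_succ, Nat.sub_add_cancel he]
    rcases h2 with ⟨k, hk⟩
    refine ⟨k, ?_⟩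
    have := hk
    rw [mul_comm (s ^ (e-1)) s, mul_assoc] at this
    exact Nat.eq_of_mul_eq_mul_left hs.pos this
  obtain ⟨a0, ha0⟩ := hkey a ha'
  obtain ⟨b0, hb0⟩ := hkey b hb
  have hav : a.val < s ^ e := ZMod.val_lt a
  have hbv : b.val < s ^ e := ZMod.val_lt b
  have hse : s ^ e = s ^ (e-1) * s := by rw [← pow_succ, Nat.sub_add_cancel he]
  have ha0s : a0 < s := by
    by_contra h
    push_neg at h
    have : s ^ (e-1) * s ≤ s ^ (e-1) * a0 := Nat.mul_le_mul_left _ h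
    omega
  have hb0s : b0 < s := by
    by_contra h
    push_neg at h
    have : s ^ (e-1) * s ≤ s ^ (e-1) * b0 := Nat.mul_le_mul_left _ h
    omega
  have ha0ne : a0 ≠ 0 := by
    intro h
    apply ha
    have : a.val = 0 := by rw [ha0, h, mul_zero]
    rwa [← ZMod.val_eq_zero]
  have ha0cast : (a0 : ZMod s) ≠ 0 := by
    rw [Ne, ZMod.natCast_eq_zero_iff]
    intro hdvd
    have := Nat.le_of_dvd (Nat.pos_of_ne_zero ha0ne) hdvd
    omega
  haveI : Fact s.Prime := ⟨hs⟩
  set c : ℕ := (((b0 : ZMod s) * (a0 : ZMod s)⁻¹ : ZMod s)).val with hc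
  have hca : (c * a0) ≡ b0 [MOD s] := by
    have h1 : ((c * a0 : ℕ) : ZMod s) = (b0 : ZMod s) := by
      push_cast
      rw [hc, ZMod.natCast_val, ZMod.cast_id, mul_assoc, inv_mul_cancel₀ ha0cast, mul_one]
    exact (ZMod.natCast_eq_natCast_iff _ _ _).mp h1
  refine ⟨c, ?_⟩
  have hgoal : (c * a.val) ≡ b.val [MOD s ^ e] := by
    have h2 : (c * a0) * s ^ (e-1) ≡ b0 * s ^ (e-1) [MOD s * s ^ (e-1)] :=
      Nat.ModEq.mul_right' _ hca
    have h3 : s * s ^ (e-1) = s ^ e := by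
      rw [← pow_succ', Nat.sub_add_cancel he]
    rw [h3] at h2
    calc c * a.val = (c * a0) * s ^ (e-1) := by rw [ha0]; ring
    _ ≡ b0 * s ^ (e-1) [MOD s ^ e] := h2
    _ = b.val := by rw [hb0]; ring
  have := (ZMod.natCast_eq_natCast_iff _ _ _).mpr hgoal
  calc b = ((b.val : ℕ) : ZMod (s^e)) := (ZMod.natCast_rightInverse b).symm
  _ = ((c * a.val : ℕ) : ZMod (s^e)) := this.symm
  _ = c • a := by
      rw [Nat.cast_mul, ZMod.natCast_val a, ZMod.cast_id, nsmul_eq_mul]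


section phisec
variable {p q α β r : ℕ}
variable {Φ : Multiplicative (ZMod (q ^ β)) →* MulAut (Multiplicative (ZMod (p ^ α)))}

lemma aux_gen {n : ℕ} [NeZero n] (x : ZMod n) :
    (ofAdd (1 : ZMod n)) ^ (x.val) = ofAdd x := by
  rw [← ofAdd_nsmul]
  congr 1
  rw [nsmul_eq_mul, mul_one]
  exact ZMod.natCast_rightInverse x

lemma aux_phi1 [NeZero (p ^ α)]
    (hr : Φ (ofAdd (1 : ZMod (q ^ β))) (ofAdd (1 : ZMod (p ^ α)))
      = ofAdd ((r : ZMod (p ^ α)))) (x : ZMod (p ^ α)) :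
    Φ (ofAdd (1 : ZMod (q ^ β))) (ofAdd x) = ofAdd ((r : ZMod (p ^ α)) * x) := by
  rw [← aux_gen x, map_pow, hr, ← ofAdd_nsmul]
  congr 1
  rw [nsmul_eq_mul]
  rw [show ((x.val : ℕ) : ZMod (p ^ α)) = x from ZMod.natCast_rightInverse x, mul_comm]

lemma aux_phi_pow [NeZero (p ^ α)]
    (hr : Φ (ofAdd (1 : ZMod (q ^ β))) (ofAdd (1 : ZMod (p ^ α)))
      = ofAdd ((r : ZMod (p ^ α)))) (n : ℕ) (x : ZMod (p ^ α)) :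
    ((Φ (ofAdd (1 : ZMod (q ^ β)))) ^ n) (ofAdd x)
      = ofAdd ((r : ZMod (p ^ α)) ^ n * x) := by
  induction n with
  | zero => simp
  | succ n ih =>
      rw [pow_succ', MulAut.mul_apply, ih, aux_phi1 hr]
      congr 1
      ring

lemma aux_phi_apply [NeZero (p ^ α)] [NeZero (q ^ β)]
    (hr : Φ (ofAdd (1 : ZMod (q ^ β))) (ofAdd (1 : ZMod (p ^ α)))
      = ofAdd ((r : ZMod (p ^ α)))) (k : ZMod (q ^ β)) (x : ZMod (p ^ α)) :
    Φ (ofAdd k) (ofAdd x) = ofAdd ((r : ZMod (p ^ α)) ^ k.val * x) := by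
  rw [← aux_gen k, map_pow]
  exact aux_phi_pow hr k.val x

lemma aux_rq [NeZero (p ^ α)] [NeZero (q ^ β)]
    (hr : Φ (ofAdd (1 : ZMod (q ^ β))) (ofAdd (1 : ZMod (p ^ α)))
      = ofAdd ((r : ZMod (p ^ α)))) :
    (r : ZMod (p ^ α)) ^ (q ^ β) = 1 := by
  have h1 : (ofAdd (1 : ZMod (q ^ β))) ^ (q ^ β) = 1 := by
    rw [← ofAdd_nsmul, nsmul_eq_mul, mul_one, ZMod.natCast_self, ofAdd_zero]
  have h2 : ((Φ (ofAdd (1 : ZMod (q ^ β)))) ^ (q ^ β)) = 1 := by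
    rw [← map_pow, h1, map_one]
  have h3 := aux_phi_pow hr (q ^ β) (1 : ZMod (p ^ α))
  rw [h2] at h3
  simp only [MulAut.one_apply, mul_one] at h3
  exact (ofAdd.injective h3).symm

-- fixed-point property of commuting elements
lemma aux_fix (x y : SemidirectProduct (Multiplicative (ZMod (p ^ α)))
      (Multiplicative (ZMod (q ^ β))) Φ)
    (hx : x.right = 1) (hc : Commute x y) : Φ y.right x.left = x.left := by
  have h := congrArg SemidirectProduct.left hc
  simp only [mul_left, hx, map_one, MulAut.one_apply] at h
  -- h : x.left * y.left = y.left * Φ y.right x.left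
  rw [mul_comm] at h
  exact (mul_left_cancel h).symm

lemma aux_cardM (n : ℕ) [NeZero n] : Nat.card (Multiplicative (ZMod n)) = n := by
  rw [Nat.card_congr Multiplicative.toAdd, Nat.card_zmod]

variable {G' : Type} 

lemma aux_mixed [NeZero (p ^ α)] [NeZero (q ^ β)]
    (hp : p.Prime) (hq : q.Prime) (hpq : p ≠ q) (hα : 1 ≤ α) (hβ : 1 ≤ β)
    (hr : Φ (ofAdd (1 : ZMod (q ^ β))) (ofAdd (1 : ZMod (p ^ α)))
      = ofAdd ((r : ZMod (p ^ α))))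
    (hord : orderOf ((r : ZMod p)) = q ^ β)
    (x y : SemidirectProduct (Multiplicative (ZMod (p ^ α)))
      (Multiplicative (ZMod (q ^ β))) Φ)
    (hc : Commute x y) (hx : orderOf x = p) (hy : orderOf y = q) : False := by
  have hcop : Nat.Coprime p (q ^ β) :=
    ((Nat.coprime_primes hp hq).mpr hpq).pow_right β
  -- x.right = 1
  have h1 : orderOf (rightHom x) ∣ p :=
    (orderOf_map_dvd rightHom x).trans (dvd_of_eq hx)
  have h2 : orderOf (rightHom x) ∣ q ^ β := by
    simpa [aux_cardM] using orderOf_dvd_natCard (rightHom x)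
  have hxr : x.right = 1 := by
    have hg := Nat.dvd_gcd h1 h2
    rw [Nat.Coprime.gcd_eq_one hcop] at hg
    exact orderOf_eq_one_iff.mp (Nat.dvd_one.mp hg)
  -- x.left ≠ 1
  have hx1 : x ≠ 1 := by
    intro h; rw [h, orderOf_one] at hx; exact hp.one_lt.ne hx
  have hμ : x.left ≠ 1 := by
    intro h; exact hx1 (SemidirectProduct.ext (by simpa using h) (by simpa using hxr))
  -- y.right ≠ 1
  have hyr : y.right ≠ 1 := by
    intro h
    have hy' : y = SemidirectProduct.inl y.left := by ext <;> simp [h]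
    rw [hy', orderOf_injective SemidirectProduct.inl inl_injective] at hy
    have : q ∣ p ^ α :=
      (dvd_of_eq hy.symm).trans (by simpa [aux_cardM] using orderOf_dvd_natCard y.left)
    exact hpq ((Nat.prime_dvd_prime_iff_eq hq hp).mp (hq.dvd_of_dvd_pow this)).symm
  have hκ : Multiplicative.toAdd y.right ≠ 0 := by
    intro h; apply hyr
    rw [← ofAdd_toAdd y.right, h, ofAdd_zero]
  -- commutation gives fixed point
  have hfix : Φ y.right x.left = x.left := aux_fix x y hxr hc
  set κ : ZMod (q ^ β) := Multiplicative.toAdd y.right with hκdef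
  set μ : ZMod (p ^ α) := Multiplicative.toAdd x.left with hμdef
  have heq : (r : ZMod (p ^ α)) ^ κ.val * μ = μ := by
    have : Φ (ofAdd κ) (ofAdd μ) = ofAdd μ := by
      rw [hκdef, hμdef, ofAdd_toAdd, ofAdd_toAdd]; exact hfix
    rw [aux_phi_apply hr] at this
    exact ofAdd.injective this
  -- r^κ.val ≠ 1 mod p
  have hκv : κ.val ≠ 0 := by
    intro h; exact hκ ((ZMod.val_eq_zero κ).mp h)
  have hne1 : ((r : ZMod p)) ^ κ.val ≠ 1 := by
    intro h
    have hdvd := orderOf_dvd_of_pow_eq_one h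
    rw [hord] at hdvd
    have := Nat.le_of_dvd (Nat.pos_of_ne_zero hκv) hdvd
    have := ZMod.val_lt κ
    omega
  have hu : IsUnit ((r : ZMod (p ^ α)) ^ κ.val - 1) := by
    apply aux_unit p α hp hα
    rw [map_sub, map_pow, map_natCast, map_one]
    exact sub_ne_zero.mpr hne1
  have hz : ((r : ZMod (p ^ α)) ^ κ.val - 1) * μ = 0 := by
    rw [sub_mul, one_mul, heq, sub_self]
  have hμ0 : μ = 0 := (hu.mul_right_eq_zero).mp hz
  apply hμ
  rw [← ofAdd_toAdd x.left, ← hμdef, hμ0, ofAdd_zero]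

lemma aux_main [NeZero (p ^ α)] [NeZero (q ^ β)]
    (hp : p.Prime) (hq : q.Prime) (hpq : p ≠ q) (hα : 1 ≤ α) (hβ : 1 ≤ β)
    (hr : Φ (ofAdd (1 : ZMod (q ^ β))) (ofAdd (1 : ZMod (p ^ α)))
      = ofAdd ((r : ZMod (p ^ α))))
    (hord : orderOf ((r : ZMod p)) = q ^ β)
    (x y : SemidirectProduct (Multiplicative (ZMod (p ^ α)))
      (Multiplicative (ZMod (q ^ β))) Φ)
    (hc : Commute x y) (s t : ℕ) (hs : s.Prime) (ht : t.Prime)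
    (hx : orderOf x = s) (hy : orderOf y = t) : ∃ n : ℕ, y = x ^ n := by
  -- the cardinality of the full group
  have hGcard : Nat.card (SemidirectProduct (Multiplicative (ZMod (p ^ α)))
      (Multiplicative (ZMod (q ^ β))) Φ) = p ^ α * q ^ β := by
    have e : (SemidirectProduct (Multiplicative (ZMod (p ^ α)))
        (Multiplicative (ZMod (q ^ β))) Φ) ≃
        (Multiplicative (ZMod (p ^ α))) × (Multiplicative (ZMod (q ^ β))) :=
      ⟨fun g => (g.left, g.right), fun z => ⟨z.1, z.2⟩,
        fun g => rfl, fun z => rfl⟩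
    rw [Nat.card_congr e, Nat.card_prod, aux_cardM, aux_cardM]
  have hsplit : ∀ u : ℕ, u.Prime →
      (u ∣ p ^ α * q ^ β) → u = p ∨ u = q := by
    intro u hu hdvd
    rcases (Nat.Prime.dvd_mul hu).mp hdvd with h | h
    · exact Or.inl ((Nat.prime_dvd_prime_iff_eq hu hp).mp (hu.dvd_of_dvd_pow h))
    · exact Or.inr ((Nat.prime_dvd_prime_iff_eq hu hq).mp (hu.dvd_of_dvd_pow h))
  have hsx : s = p ∨ s = q := hsplit s hs (by
    rw [← hx]; exact hGcard ▸ orderOf_dvd_natCard x)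
  have hty : t = p ∨ t = q := hsplit t ht (by
    rw [← hy]; exact hGcard ▸ orderOf_dvd_natCard y)
  have hcop : Nat.Coprime p (q ^ β) :=
    ((Nat.coprime_primes hp hq).mpr hpq).pow_right β
  have hcopq : Nat.Coprime q (p ^ α) :=
    ((Nat.coprime_primes hq hp).mpr (Ne.symm hpq)).pow_right α
  -- helper: an element of p-power order has trivial right component
  have hker : ∀ z : SemidirectProduct (Multiplicative (ZMod (p ^ α)))
      (Multiplicative (ZMod (q ^ β))) Φ, orderOf z = p → z.right = 1 := by
    intro z hz
    have h1 : orderOf (rightHom z) ∣ p :=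
      (orderOf_map_dvd rightHom z).trans (dvd_of_eq hz)
    have h2 : orderOf (rightHom z) ∣ q ^ β := by
      simpa [aux_cardM] using orderOf_dvd_natCard (rightHom z)
    have hg := Nat.dvd_gcd h1 h2
    rw [Nat.Coprime.gcd_eq_one hcop] at hg
    exact orderOf_eq_one_iff.mp (Nat.dvd_one.mp hg)
  -- helper: an element of order q has nontrivial right component
  have hqner : ∀ z : SemidirectProduct (Multiplicative (ZMod (p ^ α)))
      (Multiplicative (ZMod (q ^ β))) Φ, orderOf z = q →
      Multiplicative.toAdd z.right ≠ 0 := by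
    intro z hz h
    have hzr : z.right = 1 := by rw [← ofAdd_toAdd z.right, h, ofAdd_zero]
    have hz' : z = SemidirectProduct.inl z.left := by ext <;> simp [hzr]
    rw [hz', orderOf_injective SemidirectProduct.inl inl_injective] at hz
    have : q ∣ p ^ α :=
      (dvd_of_eq hz.symm).trans (by simpa [aux_cardM] using orderOf_dvd_natCard z.left)
    exact hpq ((Nat.prime_dvd_prime_iff_eq hq hp).mp (hq.dvd_of_dvd_pow this)).symm
  rcases hsx with hsp | hsq
  · rcases hty with htp | htq
    · -- both of order p : they lie in the cyclic kernel
      rw [hsp] at hx; rw [htp] at hy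
      have hxr := hker x hx
      have hyr := hker y hy
      set μ : ZMod (p ^ α) := Multiplicative.toAdd x.left with hμdef
      set ν : ZMod (p ^ α) := Multiplicative.toAdd y.left with hνdef
      have hxl : x = SemidirectProduct.inl (ofAdd μ) := by
        ext <;> simp [hμdef, hxr]
      have hyl : y = SemidirectProduct.inl (ofAdd ν) := by
        ext <;> simp [hνdef, hyr]
      have hordμ : addOrderOf μ = p := by
        have h1 := hx
        rw [hxl, orderOf_injective SemidirectProduct.inl inl_injective,
          orderOf_ofAdd_eq_addOrderOf] at h1
        exact h1
      have hordν : addOrderOf ν = p := by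
        have h1 := hy
        rw [hyl, orderOf_injective SemidirectProduct.inl inl_injective,
          orderOf_ofAdd_eq_addOrderOf] at h1
        exact h1
      have hμ0 : μ ≠ 0 := by
        intro h
        rw [h, addOrderOf_zero] at hordμ
        exact hp.one_lt.ne hordμ
      have hpμ : p • μ = 0 := by
        have h1 := addOrderOf_nsmul_eq_zero μ; rwa [hordμ] at h1
      have hpν : p • ν = 0 := by
        have h1 := addOrderOf_nsmul_eq_zero ν; rwa [hordν] at h1
      obtain ⟨c, hcν⟩ := aux_line p α hp hα μ ν hμ0 hpμ hpν
      refine ⟨c, ?_⟩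
      rw [hxl, hyl, ← map_pow, ← ofAdd_nsmul, hcν]
    · -- x of order p, y of order q : impossible
      rw [hsp] at hx; rw [htq] at hy
      exact absurd (aux_mixed hp hq hpq hα hβ hr hord x y hc hx hy) (by simp)
  · rcases hty with htp | htq
    · -- x of order q, y of order p : impossible
      rw [hsq] at hx; rw [htp] at hy
      exact absurd (aux_mixed hp hq hpq hα hβ hr hord y x hc.symm hy hx) (by simp)
    · -- both of order q
      rw [hsq] at hx; rw [htq] at hy
      set κ : ZMod (q ^ β) := Multiplicative.toAdd x.right with hκdef
      set lam : ZMod (q ^ β) := Multiplicative.toAdd y.right with hlamdef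
      have hκ0 : κ ≠ 0 := hqner x hx
      have hqκ : q • κ = 0 := by
        have hxq : (x ^ q) = 1 := by
          have h0 := pow_orderOf_eq_one x; rwa [hx] at h0
        have h2 : rightHom (x ^ q) = 1 := by rw [hxq, map_one]
        rw [map_pow] at h2
        have h3 : (ofAdd κ) ^ q = 1 := by
          rw [hκdef, ofAdd_toAdd]; exact h2
        rw [← ofAdd_nsmul, ← ofAdd_zero] at h3
        exact ofAdd.injective h3
      have hqlam : q • lam = 0 := by
        have hyq : (y ^ q) = 1 := by
          have h0 := pow_orderOf_eq_one y; rwa [hy] at h0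
        have h2 : rightHom (y ^ q) = 1 := by rw [hyq, map_one]
        rw [map_pow] at h2
        have h3 : (ofAdd lam) ^ q = 1 := by
          rw [hlamdef, ofAdd_toAdd]; exact h2
        rw [← ofAdd_nsmul, ← ofAdd_zero] at h3
        exact ofAdd.injective h3
      obtain ⟨c, hclam⟩ := aux_line q β hq hβ κ lam hκ0 hqκ hqlam
      refine ⟨c, ?_⟩
      set w := y * (x ^ c)⁻¹ with hwdef
      have hwr : rightHom w = 1 := by
        rw [hwdef, map_mul, map_inv, map_pow]
        have h1 : rightHom y = ofAdd lam := by rw [hlamdef, ofAdd_toAdd]; rfl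
        have h2 : rightHom x = ofAdd κ := by rw [hκdef, ofAdd_toAdd]; rfl
        rw [h1, h2, ← ofAdd_nsmul, ← hclam, mul_inv_eq_one]
      have hwp : orderOf w ∣ p ^ α := by
        have hw' : w = SemidirectProduct.inl w.left := by
          ext
          · simp
          · simpa using hwr
        rw [hw', orderOf_injective SemidirectProduct.inl inl_injective]
        simpa [aux_cardM] using orderOf_dvd_natCard w.left
      have hcomm : Commute y ((x ^ c)⁻¹) := ((hc.symm).pow_right c).inv_right
      have hxq : (x ^ q) = 1 := by
        have h0 := pow_orderOf_eq_one x; rwa [hx] at h0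
      have hyq : (y ^ q) = 1 := by
        have h0 := pow_orderOf_eq_one y; rwa [hy] at h0
      have hwq : w ^ q = 1 := by
        rw [hwdef, hcomm.mul_pow, hyq, one_mul, inv_pow, ← pow_mul, mul_comm c q,
          pow_mul, hxq, one_pow, inv_one]
      have hwq' : orderOf w ∣ q := orderOf_dvd_of_pow_eq_one hwq
      have hg := Nat.dvd_gcd hwq' hwp
      rw [Nat.Coprime.gcd_eq_one hcopq] at hg
      have hw1 : w = 1 := orderOf_eq_one_iff.mp (Nat.dvd_one.mp hg)
      rw [hwdef] at hw1
      exact (mul_inv_eq_one.mp hw1)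

end phisec


/-- For distinct primes `p, q` with `p` odd and `α, β ≥ 1`, consider the
semidirect product `G = (ℤ/p^αℤ) ⋊[Φ] (ℤ/q^βℤ)` whose chosen generator acts
on the generator of `ℤ/p^αℤ` by raising to the `r`-th power.  All subgroups
of `G` are indecomposable iff `q^β ∣ p - 1` and `r` has order `q^β` in
`(ℤ/pℤ)ˣ`. -/
theorem stmt_18 (p q α β : ℕ) (hp : p.Prime) (hq : q.Prime)
    (hpodd : Odd p) (hpq : p ≠ q) (hα : 1 ≤ α) (hβ : 1 ≤ β) (r : ℕ)
    (Φ : Multiplicative (ZMod (q ^ β)) →* MulAut (Multiplicative (ZMod (p ^ α))))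
    (hr : Φ (Multiplicative.ofAdd (1 : ZMod (q ^ β)))
        (Multiplicative.ofAdd (1 : ZMod (p ^ α))) =
        Multiplicative.ofAdd ((r : ZMod (p ^ α)))) :
    (∀ H : Subgroup (SemidirectProduct (Multiplicative (ZMod (p ^ α)))
        (Multiplicative (ZMod (q ^ β))) Φ), Indecomposable H) ↔
      (q ^ β ∣ p - 1 ∧ orderOf ((r : ZMod p)) = q ^ β) := by
  haveI : NeZero (p ^ α) := ⟨pow_ne_zero _ hp.pos.ne'⟩
  haveI : NeZero (q ^ β) := ⟨pow_ne_zero _ hq.pos.ne'⟩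
  haveI : Fact p.Prime := ⟨hp⟩
  haveI : Fact q.Prime := ⟨hq⟩
  have hrq : (r : ZMod (p ^ α)) ^ (q ^ β) = 1 := aux_rq hr
  have hrqp : ((r : ZMod p)) ^ (q ^ β) = 1 := by
    have h := congrArg (ZMod.castHom (dvd_pow_self p (by omega : α ≠ 0)) (ZMod p)) hrq
    rwa [map_pow, map_natCast, map_one] at h
  have hordvd : orderOf ((r : ZMod p)) ∣ q ^ β := orderOf_dvd_of_pow_eq_one hrqp
  have hrne : (r : ZMod p) ≠ 0 := by
    intro h
    rw [h, zero_pow (pow_ne_zero β hq.pos.ne')] at hrqp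
    exact zero_ne_one hrqp
  -- the equivalence of the underlying sets
  have eGNQ : (SemidirectProduct (Multiplicative (ZMod (p ^ α)))
      (Multiplicative (ZMod (q ^ β))) Φ) ≃
      (Multiplicative (ZMod (p ^ α))) × (Multiplicative (ZMod (q ^ β))) :=
    ⟨fun g => (g.left, g.right), fun z => ⟨z.1, z.2⟩, fun g => rfl, fun z => rfl⟩
  haveI hGf : Finite (SemidirectProduct (Multiplicative (ZMod (p ^ α)))
      (Multiplicative (ZMod (q ^ β))) Φ) := Finite.of_equiv _ eGNQ.symm
  constructor
  · intro hIndec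
    have hord : orderOf ((r : ZMod p)) = q ^ β := by
      by_contra hne
      obtain ⟨i, hile, hi⟩ := (Nat.dvd_prime_pow hq).mp hordvd
      have hilt : i ≤ β - 1 := by
        rcases Nat.lt_or_ge i β with h | h
        · omega
        · exfalso; apply hne; rw [hi]; congr 1; omega
      have hr1p : ((r : ZMod p)) ^ (q ^ (β - 1)) = 1 := by
        apply orderOf_dvd_iff_pow_eq_one.mp
        rw [hi]; exact pow_dvd_pow q hilt
      set x0 : ZMod (p ^ α) := (r : ZMod (p ^ α)) ^ (q ^ (β - 1)) with hx0
      have hx0q : x0 ^ q = 1 := by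
        rw [hx0, ← pow_mul, ← pow_succ, Nat.sub_add_cancel hβ]; exact hrq
      have hx0cast : (ZMod.castHom (dvd_pow_self p (by omega : α ≠ 0)) (ZMod p)) x0 = 1 := by
        rw [hx0, map_pow, map_natCast]; exact hr1p
      -- lifting-the-exponent: x0 = 1 in ZMod (p ^ α)
      have hx01 : x0 = 1 := by
        set S : ZMod (p ^ α) := ∑ j ∈ Finset.range q, x0 ^ j with hS
        have hSu : IsUnit S := by
          apply aux_unit p α hp hα
          rw [hS, map_sum]
          have hone : ∀ j ∈ Finset.range q,
              (ZMod.castHom (dvd_pow_self p (by omega : α ≠ 0)) (ZMod p)) (x0 ^ j) = 1 := by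
            intro j _; rw [map_pow, hx0cast, one_pow]
          rw [Finset.sum_congr rfl hone, Finset.sum_const, Finset.card_range,
            nsmul_eq_mul, mul_one]
          intro h
          exact hpq ((Nat.prime_dvd_prime_iff_eq hp hq).mp
            ((ZMod.natCast_eq_zero_iff q p).mp h))
        have hgeom : S * (x0 - 1) = 0 := by
          rw [hS, geom_sum_mul, hx0q, sub_self]
        exact sub_eq_zero.mp ((hSu.mul_right_eq_zero).mp hgeom)
      -- build a decomposable (cyclic of order p^α * q) subgroup
      set c0 : ZMod (q ^ β) := ((q ^ (β - 1) : ℕ) : ZMod (q ^ β)) with hc0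
      have hc0val : c0.val = q ^ (β - 1) :=
        ZMod.val_cast_of_lt (Nat.pow_lt_pow_right hq.one_lt (by omega))
      have hact : Φ (ofAdd c0) (ofAdd (1 : ZMod (p ^ α))) = ofAdd (1 : ZMod (p ^ α)) := by
        rw [aux_phi_apply hr, hc0val, ← hx0, hx01, one_mul]
      set g1 := SemidirectProduct.inl (φ := Φ) (ofAdd (1 : ZMod (p ^ α))) with hg1
      set g2 := SemidirectProduct.inr (φ := Φ) (ofAdd c0) with hg2
      have hcomm : Commute g1 g2 := by
        show g1 * g2 = g2 * g1
        ext
        · simp [hg1, hg2, hact]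
        · simp [hg1, hg2]
      have hog1 : orderOf g1 = p ^ α := by
        rw [hg1, orderOf_injective SemidirectProduct.inl inl_injective,
          orderOf_ofAdd_eq_addOrderOf, ZMod.addOrderOf_one]
      have hog2 : orderOf g2 = q := by
        rw [hg2, orderOf_injective SemidirectProduct.inr inr_injective,
          orderOf_ofAdd_eq_addOrderOf, hc0,
          ZMod.addOrderOf_coe _ (NeZero.ne (q ^ β)),
          Nat.gcd_eq_right (pow_dvd_pow q (by omega : β - 1 ≤ β))]
        rw [Nat.pow_div (by omega) hq.pos, show β - (β - 1) = 1 by omega, pow_one]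
      have hco : Nat.Coprime (p ^ α) q :=
        (((Nat.coprime_primes hp hq).mpr hpq).pow_left α)
      have hog : orderOf (g1 * g2) = p ^ α * q := by
        rw [hcomm.orderOf_mul_eq_mul_orderOf_of_coprime (by rw [hog1, hog2]; exact hco),
          hog1, hog2]
      set g := g1 * g2 with hg
      set H0 := Subgroup.zpowers g with hH0
      haveI hcyc : IsCyclic ↥H0 := by
        constructor
        refine ⟨⟨g, Subgroup.mem_zpowers g⟩, ?_⟩
        rintro ⟨x, hx⟩
        obtain ⟨n, hn⟩ := Subgroup.mem_zpowers_iff.mp hx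
        exact ⟨n, Subtype.ext (by rw [SubgroupClass.coe_zpow]; exact hn)⟩
      have hcard : Nat.card ↥H0 = p ^ α * q := by
        rw [hH0, Nat.card_zpowers]; exact hog
      have e0 := (zmodCyclicMulEquiv hcyc).symm
      rw [hcard] at e0
      have ecrt : ZMod (p ^ α * q) ≃+ ZMod (p ^ α) × ZMod q :=
        (ZMod.chineseRemainder hco).toAddEquiv
      have emul : Multiplicative (ZMod (p ^ α) × ZMod q) ≃*
          Multiplicative (ZMod (p ^ α)) × Multiplicative (ZMod q) :=
        MulEquiv.prodMultiplicative (ZMod (p ^ α)) (ZMod q)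
      have efin : ↥H0 ≃* (Multiplicative (ZMod (p ^ α))) × (Multiplicative (ZMod q)) :=
        e0.trans ((AddEquiv.toMultiplicative ecrt).trans emul)
      haveI : Fact (1 < p ^ α) := ⟨Nat.one_lt_pow (by omega) hp.one_lt⟩
      haveI : Fact (1 < q) := ⟨hq.one_lt⟩
      rcases hIndec H0 (Multiplicative (ZMod (p ^ α))) (Multiplicative (ZMod q)) ⟨efin⟩
        with hA | hB
      · exact (not_subsingleton _) hA
      · exact (not_subsingleton _) hB
    refine ⟨?_, hord⟩
    rw [← hord]
    exact orderOf_dvd_of_pow_eq_one (ZMod.pow_card_sub_one_eq_one hrne)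
  · rintro ⟨hdvd, hord⟩ H A B instA instB ⟨e⟩
    by_contra hcon
    rw [not_or] at hcon
    obtain ⟨hA, hB⟩ := hcon
    haveI : Nontrivial A := not_subsingleton_iff_nontrivial.mp hA
    haveI : Nontrivial B := not_subsingleton_iff_nontrivial.mp hB
    haveI : Finite (A × B) := Finite.of_equiv _ e.toEquiv
    haveI : Finite A := Finite.prod_left B
    haveI : Finite B := Finite.prod_right A
    -- Cauchy's theorem in both factors
    set s := (Nat.card A).minFac with hsdef
    haveI hsp : Fact s.Prime := ⟨Nat.minFac_prime (fun h1 =>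
      absurd (Nat.card_eq_one_iff_unique.mp h1).1 (not_subsingleton A))⟩
    obtain ⟨a, ha⟩ := exists_prime_orderOf_dvd_card' s (Nat.minFac_dvd _)
    set t := (Nat.card B).minFac with htdef
    haveI htp : Fact t.Prime := ⟨Nat.minFac_prime (fun h1 =>
      absurd (Nat.card_eq_one_iff_unique.mp h1).1 (not_subsingleton B))⟩
    obtain ⟨b, hb⟩ := exists_prime_orderOf_dvd_card' t (Nat.minFac_dvd _)
    set u := e.symm (a, 1) with hu
    set v := e.symm (1, b) with hv
    have hcuv : u * v = v * u := by
      rw [hu, hv, ← map_mul, ← map_mul]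
      congr 1
      ext <;> simp [mul_comm]
    have hou : orderOf u = s := by
      rw [hu, (e.symm.orderOf_eq _), Prod.orderOf_mk, orderOf_one, Nat.lcm_one_right, ha]
    have hov : orderOf v = t := by
      rw [hv, (e.symm.orderOf_eq _), Prod.orderOf_mk, orderOf_one, Nat.lcm_one_left, hb]
    have hxG : orderOf ((u : SemidirectProduct (Multiplicative (ZMod (p ^ α)))
        (Multiplicative (ZMod (q ^ β))) Φ)) = s := by
      exact (orderOf_injective H.subtype Subtype.coe_injective u).trans hou
    have hyG : orderOf ((v : SemidirectProduct (Multiplicative (ZMod (p ^ α)))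
        (Multiplicative (ZMod (q ^ β))) Φ)) = t := by
      exact (orderOf_injective H.subtype Subtype.coe_injective v).trans hov
    have hcG : Commute (u : SemidirectProduct (Multiplicative (ZMod (p ^ α)))
        (Multiplicative (ZMod (q ^ β))) Φ) (v : SemidirectProduct
        (Multiplicative (ZMod (p ^ α))) (Multiplicative (ZMod (q ^ β))) Φ) := by
      have := congrArg (H.subtype) hcuv
      simp at this; exact this
    obtain ⟨n, hn⟩ := aux_main hp hq hpq hα hβ hr hord _ _ hcG s t hsp.out htp.out hxG hyG
    have hvu : v = u ^ n := by
      apply Subtype.ext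
      rw [SubmonoidClass.coe_pow]
      exact hn
    have hfin : ((1 : A), b) = (a ^ n, (1 : B) ^ n) := by
      calc ((1 : A), b) = e v := (e.apply_symm_apply _).symm
      _ = e (u ^ n) := by rw [hvu]
      _ = (e u) ^ n := map_pow e u n
      _ = ((a, (1 : B))) ^ n := by rw [hu, e.apply_symm_apply]
      _ = (a ^ n, (1 : B) ^ n) := by rw [Prod.pow_mk]
    have hb1 : b = 1 := by
      have := congrArg Prod.snd hfin
      simpa using this
    rw [hb1, orderOf_one] at hb
    exact htp.out.one_lt.ne hb
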